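/- Let A = ρĀ with Ā symmetric stochastic, 0 < ρ < 1, and Σ_x = σ²_gap I + β𝟏𝟏ᵀ + Σ̄ with σ²_gap > 0 and all entries of Σ̄ bounded: the off-diagonal oscillation of Σ_x satisfies Osc(Off(Σ_x))/σ²_gap ≤ A⁺_min (1 − ρ²)/(2ρ(ρ² + 1)), where A⁺_min is the smallest nonzero entry of A. Then the limiting error E = (1/σ²_gap)[βρ𝟏𝟏ᵀ + (I − A²) Σ_{i=0}^∞ A^{i+1} Σ̄ A^i] has off-diagonal oscillation at most A⁺_min/2. -/

import Mathlib

open Matrix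

/-- The all-ones matrix `𝟏𝟏ᵀ`. -/
def onesMat (N : ℕ) : Matrix (Fin N) (Fin N) ℝ := Matrix.of fun _ _ => (1 : ℝ)

theorem separability_sufficient_condition {N : ℕ}
    (Abar : Matrix (Fin N) (Fin N) ℝ)
    (hnonneg : ∀ i j, 0 ≤ Abar i j)
    (hsymm : Abar.IsSymm)
    (hstoch : ∀ i, ∑ j, Abar i j = 1)
    (ρ : ℝ) (hρ0 : 0 < ρ) (hρ1 : ρ < 1)
    (A : Matrix (Fin N) (Fin N) ℝ) (hA : A = ρ • Abar)
    (σ2gap β : ℝ) (hσ2 : 0 < σ2gap)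
    (Sbar : Matrix (Fin N) (Fin N) ℝ) (hSbar : Sbar.IsSymm)
    (oscS : ℝ)
    (hoscS : ∀ i j k l, Sbar i j - Sbar k l ≤ oscS)
    (Amin : ℝ) (hAmin_pos : 0 < Amin)
    (hAmin : ∀ i j, A i j ≠ 0 → Amin ≤ A i j)
    (hcond : oscS / σ2gap ≤ Amin * (1 - ρ ^ 2) / (2 * ρ * (ρ ^ 2 + 1)))
    (E : Matrix (Fin N) (Fin N) ℝ)
    (hE : E = (1 / σ2gap) • ((β * ρ) • onesMat N
        + (1 - A ^ 2) * ∑' i : ℕ, A ^ (i + 1) * Sbar * A ^ i)) :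
    ∀ i j k l, i ≠ j → k ≠ l → E i j - E k l ≤ Amin / 2 := by
  intro i j k l hij hkl
  have hρ2lt : ρ ^ 2 < 1 := by nlinarith
  have hρ2nn : (0:ℝ) ≤ ρ ^ 2 := sq_nonneg ρ
  have h1ρ2 : (0:ℝ) < 1 - ρ ^ 2 := by linarith
  have hosc0 : (0:ℝ) ≤ oscS := by have := hoscS i i i i; linarith
  -- basic facts about A
  have hAnn : ∀ p q, 0 ≤ A p q := by
    intro p q; rw [hA]
    simpa using mul_nonneg hρ0.le (hnonneg p q)
  have hAT : Aᵀ = A := by rw [hA, Matrix.transpose_smul, hsymm.eq]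
  have hArow : ∀ p, ∑ a, A p a = ρ := by
    intro p; rw [hA]
    simp only [Matrix.smul_apply, smul_eq_mul, ← Finset.mul_sum, hstoch, mul_one]
  have hAnnPow : ∀ n p q, 0 ≤ (A ^ n) p q := by
    intro n
    induction n with
    | zero => intro p q; rw [pow_zero, Matrix.one_apply]; split <;> norm_num
    | succ n ih =>
      intro p q; rw [pow_succ, Matrix.mul_apply]
      exact Finset.sum_nonneg fun a _ => mul_nonneg (ih p a) (hAnn a q)
  have hrow : ∀ n p, ∑ a, (A ^ n) p a = ρ ^ n := by
    intro n
    induction n with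
    | zero => intro p; simp [Matrix.one_apply]
    | succ n ih =>
      intro p
      rw [pow_succ]
      calc ∑ a, (A ^ n * A) p a = ∑ a, ∑ b, (A ^ n) p b * A b a := by
            simp [Matrix.mul_apply]
        _ = ∑ b, (A ^ n) p b * ∑ a, A b a := by
            rw [Finset.sum_comm]; simp [Finset.mul_sum]
        _ = ρ ^ n * ρ := by
            simp only [hArow, ← Finset.sum_mul, ih]
        _ = ρ ^ (n + 1) := by ring
  have hcol : ∀ n q, ∑ b, (A ^ n) b q = ρ ^ n := by
    intro n q
    have hPT : (A ^ n)ᵀ = A ^ n := by rw [Matrix.transpose_pow, hAT]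
    have : ∀ b, (A ^ n) b q = (A ^ n) q b := by
      intro b
      conv_lhs => rw [← hPT]
      rfl
    simp only [this]
    exact hrow n q
  -- choose the center c
  obtain ⟨pmax, -, hmax⟩ := Finset.exists_max_image (Finset.univ : Finset (Fin N × Fin N))
    (fun p => Sbar p.1 p.2) ⟨(i, j), Finset.mem_univ _⟩
  obtain ⟨pmin, -, hmin⟩ := Finset.exists_min_image (Finset.univ : Finset (Fin N × Fin N))
    (fun p => Sbar p.1 p.2) ⟨(i, j), Finset.mem_univ _⟩
  set c : ℝ := (Sbar pmax.1 pmax.2 + Sbar pmin.1 pmin.2) / 2 with hc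
  have hMm : Sbar pmax.1 pmax.2 - Sbar pmin.1 pmin.2 ≤ oscS := hoscS _ _ _ _
  have hRb : ∀ a b, |Sbar a b - c| ≤ oscS / 2 := by
    intro a b
    have h1 : Sbar a b ≤ Sbar pmax.1 pmax.2 := hmax (a, b) (Finset.mem_univ _)
    have h2 : Sbar pmin.1 pmin.2 ≤ Sbar a b := hmin (a, b) (Finset.mem_univ _)
    rw [abs_le]; constructor <;> [skip; skip] <;> · rw [hc]; linarith
  -- the series
  set f : ℕ → Matrix (Fin N) (Fin N) ℝ := fun n => A ^ (n + 1) * Sbar * A ^ n with hf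
  have hkey : ∀ n p q, |f n p q - c * ρ ^ (2 * n + 1)| ≤ oscS / 2 * ρ ^ (2 * n + 1) := by
    intro n p q
    have e2 : ∀ b, (∑ a, (A ^ (n+1)) p a * (Sbar a b - c)) * (A ^ n) b q
        = (∑ a, (A ^ (n+1)) p a * Sbar a b) * (A ^ n) b q - ρ ^ (n+1) * c * (A ^ n) b q := by
      intro b
      have : ∑ a, (A ^ (n+1)) p a * (Sbar a b - c)
          = (∑ a, (A ^ (n+1)) p a * Sbar a b) - ρ ^ (n+1) * c := by
        simp only [mul_sub]
        rw [Finset.sum_sub_distrib, ← Finset.sum_mul, hrow]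
      rw [this, sub_mul]
    have hpow : ∀ x : ℝ, ρ ^ (n+1) * x * ρ ^ n = x * ρ ^ (2 * n + 1) := by
      intro x
      rw [mul_right_comm, ← pow_add, show n + 1 + n = 2 * n + 1 from by omega, mul_comm]
    have hexp : f n p q - c * ρ ^ (2 * n + 1)
        = ∑ b, (∑ a, (A ^ (n+1)) p a * (Sbar a b - c)) * (A ^ n) b q := by
      have e1 : f n p q = ∑ b, (∑ a, (A ^ (n+1)) p a * Sbar a b) * (A ^ n) b q := by
        simp [hf, Matrix.mul_apply]
      rw [Finset.sum_congr rfl fun b _ => e2 b, Finset.sum_sub_distrib, e1]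
      have : ∑ b, ρ ^ (n+1) * c * (A ^ n) b q = ρ ^ (n+1) * c * ρ ^ n := by
        rw [← Finset.mul_sum, hcol]
      rw [this, hpow c]
    rw [hexp]
    calc |∑ b, (∑ a, (A ^ (n+1)) p a * (Sbar a b - c)) * (A ^ n) b q|
        ≤ ∑ b, |(∑ a, (A ^ (n+1)) p a * (Sbar a b - c)) * (A ^ n) b q| :=
          Finset.abs_sum_le_sum_abs _ _
      _ ≤ ∑ b, (ρ ^ (n+1) * (oscS / 2)) * (A ^ n) b q := by
          apply Finset.sum_le_sum
          intro b _
          rw [abs_mul, abs_of_nonneg (hAnnPow n b q)]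
          refine mul_le_mul_of_nonneg_right ?_ (hAnnPow n b q)
          calc |∑ a, (A ^ (n+1)) p a * (Sbar a b - c)|
              ≤ ∑ a, |(A ^ (n+1)) p a * (Sbar a b - c)| := Finset.abs_sum_le_sum_abs _ _
            _ ≤ ∑ a, (A ^ (n+1)) p a * (oscS / 2) := by
                apply Finset.sum_le_sum
                intro a _
                rw [abs_mul, abs_of_nonneg (hAnnPow _ p a)]
                exact mul_le_mul_of_nonneg_left (hRb a b) (hAnnPow _ p a)
            _ = ρ ^ (n+1) * (oscS / 2) := by rw [← Finset.sum_mul, hrow]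
      _ = (ρ ^ (n+1) * (oscS / 2)) * ∑ b, (A ^ n) b q := by rw [← Finset.mul_sum]
      _ = oscS / 2 * ρ ^ (2 * n + 1) := by
          rw [hcol, hpow (oscS / 2)]
  -- summability
  have hgeo : Summable (fun n : ℕ => ρ ^ (2 * n + 1)) := by
    have he : (fun n : ℕ => ρ ^ (2 * n + 1)) = fun n => ρ * (ρ ^ 2) ^ n := by
      funext n; rw [← pow_mul]; ring
    rw [he]
    exact (summable_geometric_of_lt_one hρ2nn hρ2lt).mul_left ρ
  have hgeosum : ∑' n : ℕ, ρ ^ (2 * n + 1) = ρ * (1 - ρ ^ 2)⁻¹ := by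
    have he : (fun n : ℕ => ρ ^ (2 * n + 1)) = fun n => ρ * (ρ ^ 2) ^ n := by
      funext n; rw [← pow_mul]; ring
    rw [he, tsum_mul_left, tsum_geometric_of_lt_one hρ2nn hρ2lt]
  have hgsummable : ∀ p q, Summable (fun n => f n p q - c * ρ ^ (2 * n + 1)) := fun p q =>
    Summable.of_norm_bounded (hgeo.mul_left (oscS / 2)) fun n => by
      rw [Real.norm_eq_abs]; exact hkey n p q
  have hsumEntry : ∀ p q, Summable (fun n => f n p q) := by
    intro p q
    have := (hgsummable p q).add (hgeo.mul_left c)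
    simpa using this
  have hsumMat : Summable f := Pi.summable.2 fun p => Pi.summable.2 fun q => hsumEntry p q
  -- entrywise tsum
  set T : Matrix (Fin N) (Fin N) ℝ := ∑' n, f n with hTdef
  set ρ' : ℝ := ρ * (1 - ρ ^ 2)⁻¹ with hρ'
  set r : Fin N → Fin N → ℝ := fun p q => ∑' n, (f n p q - c * ρ ^ (2 * n + 1)) with hr
  have hT : ∀ p q, T p q = c * ρ' + r p q := by
    intro p q
    rw [hTdef, show (∑' n, f n) p q = ∑' n, f n p q from
      (congrFun (tsum_apply hsumMat (x := p)) q).trans (tsum_apply (Pi.summable.1 hsumMat p))]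
    have : (fun n => f n p q) = fun n => (f n p q - c * ρ ^ (2 * n + 1)) + c * ρ ^ (2 * n + 1) := by
      funext n; ring
    rw [this, Summable.tsum_add (hgsummable p q) (hgeo.mul_left c), tsum_mul_left, hgeosum]
    ring
  set M : ℝ := oscS / 2 * ρ' with hM
  have hMnn : 0 ≤ M := by
    have : 0 ≤ ρ' := by positivity
    positivity
  have hrbound : ∀ p q, |r p q| ≤ M := by
    intro p q
    rw [hr]
    calc |∑' n, (f n p q - c * ρ ^ (2 * n + 1))|
        ≤ ∑' n, |f n p q - c * ρ ^ (2 * n + 1)| := by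
          have habs : Summable fun n => ‖f n p q - c * ρ ^ (2 * n + 1)‖ := by
            simpa [Real.norm_eq_abs] using (hgsummable p q).abs
          simpa [Real.norm_eq_abs] using
            norm_tsum_le_tsum_norm (f := fun n => f n p q - c * ρ ^ (2 * n + 1)) habs
      _ ≤ ∑' n, oscS / 2 * ρ ^ (2 * n + 1) :=
          Summable.tsum_le_tsum (fun n => hkey n p q) (hgsummable p q).abs (hgeo.mul_left (oscS / 2))
      _ = M := by rw [tsum_mul_left, hgeosum]
  -- entries of E
  have hU : ∀ p q, ((1 - A ^ 2) * T : Matrix (Fin N) (Fin N) ℝ) p q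
      = c * ρ' - ρ ^ 2 * (c * ρ') + (r p q - ∑ a, (A ^ 2) p a * r a q) := by
    intro p q
    rw [Matrix.sub_mul, Matrix.one_mul, Matrix.sub_apply, hT p q, Matrix.mul_apply]
    have : ∀ a, (A ^ 2) p a * T a q = (A ^ 2) p a * (c * ρ') + (A ^ 2) p a * r a q := by
      intro a; rw [hT a q]; ring
    rw [Finset.sum_congr rfl fun a _ => this a, Finset.sum_add_distrib, ← Finset.sum_mul, hrow]
    ring
  have hw : ∀ p q, |∑ a, (A ^ 2) p a * r a q| ≤ ρ ^ 2 * M := by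
    intro p q
    calc |∑ a, (A ^ 2) p a * r a q| ≤ ∑ a, |(A ^ 2) p a * r a q| := Finset.abs_sum_le_sum_abs _ _
      _ ≤ ∑ a, (A ^ 2) p a * M := by
          apply Finset.sum_le_sum
          intro a _
          rw [abs_mul, abs_of_nonneg (hAnnPow 2 p a)]
          exact mul_le_mul_of_nonneg_left (hrbound a q) (hAnnPow 2 p a)
      _ = ρ ^ 2 * M := by rw [← Finset.sum_mul, hrow]
  have hEentry : ∀ p q, E p q = (1 / σ2gap) * (β * ρ + (c * ρ' - ρ ^ 2 * (c * ρ')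
      + (r p q - ∑ a, (A ^ 2) p a * r a q))) := by
    intro p q
    rw [hE]
    simp only [Matrix.smul_apply, Matrix.add_apply, smul_eq_mul, onesMat, Matrix.of_apply, mul_one]
    rw [hU p q]
  -- final computation
  have h1 := abs_le.1 (hrbound i j)
  have h2 := abs_le.1 (hrbound k l)
  have h3 := abs_le.1 (hw i j)
  have h4 := abs_le.1 (hw k l)
  have hstep : E i j - E k l ≤ (1 / σ2gap) * (2 * M + 2 * ρ ^ 2 * M) := by
    rw [hEentry i j, hEentry k l, ← mul_sub]
    apply mul_le_mul_of_nonneg_left _ (by positivity)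
    linarith [h1.1, h1.2, h2.1, h2.2, h3.1, h3.2, h4.1, h4.2]
  have hfinal : (1 / σ2gap) * (2 * M + 2 * ρ ^ 2 * M) ≤ Amin / 2 := by
    have h2' : oscS * (2 * ρ * (ρ ^ 2 + 1)) ≤ Amin * (1 - ρ ^ 2) * σ2gap := by
      rw [div_le_div_iff₀ hσ2 (by positivity)] at hcond
      linarith
    have hne1 : σ2gap ≠ 0 := hσ2.ne'
    have hne2 : (1 - ρ ^ 2) ≠ 0 := h1ρ2.ne'
    have he : (1 / σ2gap) * (2 * M + 2 * ρ ^ 2 * M)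
        = oscS * ρ * (ρ ^ 2 + 1) / (σ2gap * (1 - ρ ^ 2)) := by
      rw [hM, hρ']
      field_simp
      ring
    rw [he, div_le_div_iff₀ (by positivity) (by norm_num : (0:ℝ) < 2)]
    nlinarith [h2']
  exact hstep.trans hfinal
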